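/- Gallery-existence theorem (Theorem 3.1, main part): Let F be a one-dimensional tropical fan in ℝ^n with primitive generators v_1, …, v_q and weights ω_1, …, ω_q, and let M(x) = max(0, l_1(x), …, l_k(x)) be a nonnegative tropical regular function such that M·F = Σ_{i=1}^q ω_i M(v_i) = 1. Then F admits a gallery supported on a linear functional of M: there exist distinct indices a, b ∈ {1,…,q} and an index s ∈ {1,…,k} such that ω_a = ω_b = 1, l_s(v_a) = 1, l_s(v_b) = −1, and l_s(v_j) = 0 for all j ∉ {a, b}. -/
import Mathlib


/-- Integer pairing of a functional `l ∈ (ℤⁿ)^∨` with a vector `x ∈ ℤⁿ`. -/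
def dotZ {n : ℕ} (l x : Fin n → ℤ) : ℤ := ∑ j, l j * x j

/-- Value of the nonnegative tropical regular function `max(0, l₁, …, l_k)` at `x ∈ ℤⁿ`. -/
def tropEvalZ {n k : ℕ} (l : Fin k → Fin n → ℤ) (x : Fin n → ℤ) : ℤ :=
  Finset.univ.fold max 0 (fun s => dotZ (l s) x)

/-- A one-dimensional tropical fan in ℝⁿ: pairwise distinct primitive integer vectors
`v i` (the primitive generators of the rays) spanning ℝⁿ, with positive integer weights
`w i`, subject to the balancing condition `∑ i, w i • v i = 0`. -/
structure TropFan1 (n q : ℕ) where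
  v : Fin q → Fin n → ℤ
  w : Fin q → ℤ
  v_inj : Function.Injective v
  v_prim : ∀ i, Finset.univ.gcd (v i) = 1
  w_pos : ∀ i, 0 < w i
  balanced : ∑ i, w i • v i = 0
  spans : Submodule.span ℝ (Set.range fun i => fun j => ((v i j : ℝ))) = ⊤

/-- A gallery of `F` on the pair of distinct indices `(a, b)`. -/
def IsGallery {n q : ℕ} (F : TropFan1 n q) (a b : Fin q) (l : Fin n → ℤ) : Prop :=
  a ≠ b ∧ F.w a = 1 ∧ F.w b = 1 ∧ dotZ l (F.v a) = 1 ∧ dotZ l (F.v b) = -1 ∧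
    ∀ j, j ≠ a → j ≠ b → dotZ l (F.v j) = 0

lemma sum_eq_one_aux {α : Type*} [DecidableEq α] (s : Finset α) (f : α → ℤ)
    (h0 : ∀ i ∈ s, 0 ≤ f i) (h : ∑ i ∈ s, f i = 1) :
    ∃ a ∈ s, f a = 1 ∧ ∀ j ∈ s, j ≠ a → f j = 0 := by
  by_cases hall : ∀ i ∈ s, f i = 0
  · rw [Finset.sum_eq_zero hall] at h; omega
  push_neg at hall
  obtain ⟨a, ha, hfa⟩ := hall
  have hrest : 0 ≤ ∑ j ∈ s.erase a, f j :=
    Finset.sum_nonneg fun j hj => h0 j (Finset.mem_of_mem_erase hj)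
  have hsplit : f a + ∑ j ∈ s.erase a, f j = 1 := by
    rw [Finset.add_sum_erase s f ha]; exact h
  have hfa1 : 0 ≤ f a := h0 a ha
  have hfae : f a = 1 := by omega
  have hz : ∑ j ∈ s.erase a, f j = 0 := by omega
  exact ⟨a, ha, hfae, fun j hj hja =>
    (Finset.sum_eq_zero_iff_of_nonneg
      (fun i hi => h0 i (Finset.mem_of_mem_erase hi))).mp hz j (Finset.mem_erase.mpr ⟨hja, hj⟩)⟩

lemma trop_nonneg {n k : ℕ} (l : Fin k → Fin n → ℤ) (x : Fin n → ℤ) :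
    0 ≤ tropEvalZ l x := (Finset.le_fold_max _).2 (Or.inl le_rfl)

lemma dot_le_trop {n k : ℕ} (l : Fin k → Fin n → ℤ) (x : Fin n → ℤ) (s : Fin k) :
    dotZ (l s) x ≤ tropEvalZ l x :=
  (Finset.le_fold_max _).2 (Or.inr ⟨s, Finset.mem_univ s, le_rfl⟩)

lemma trop_achieved {n k : ℕ} (l : Fin k → Fin n → ℤ) (x : Fin n → ℤ)
    (h : 0 < tropEvalZ l x) : ∃ s, dotZ (l s) x = tropEvalZ l x := by
  rcases (Finset.le_fold_max _).1 (le_refl (tropEvalZ l x)) with h1 | ⟨s, _, hs⟩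
  · omega
  · exact ⟨s, le_antisymm (dot_le_trop l x s) hs⟩

/-- Gallery-existence theorem (Theorem 3.1, main part). -/
theorem gallery_existence {n q k : ℕ} (F : TropFan1 n q)
    (l : Fin k → Fin n → ℤ)
    (h : ∑ i, F.w i * tropEvalZ l (F.v i) = 1) :
    ∃ a b : Fin q, a ≠ b ∧ ∃ s : Fin k,
      F.w a = 1 ∧ F.w b = 1 ∧ dotZ (l s) (F.v a) = 1 ∧ dotZ (l s) (F.v b) = -1 ∧
      ∀ j, j ≠ a → j ≠ b → dotZ (l s) (F.v j) = 0 := by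
  have hw := F.w_pos
  obtain ⟨a, -, ha1, haz⟩ := sum_eq_one_aux Finset.univ
    (fun i => F.w i * tropEvalZ l (F.v i))
    (fun i _ => mul_nonneg (hw i).le (trop_nonneg _ _)) h
  -- w a = 1 and M(v a) = 1
  have hwa1 : F.w a = 1 := Int.eq_one_of_mul_eq_one_right (hw a).le ha1
  have hMa : tropEvalZ l (F.v a) = 1 ∧ F.w a = 1 := by
    rw [hwa1, one_mul] at ha1
    exact ⟨ha1, hwa1⟩
  have hMj : ∀ j, j ≠ a → tropEvalZ l (F.v j) = 0 := by
    intro j hj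
    have h2 := haz j (Finset.mem_univ j) hj
    rcases mul_eq_zero.mp h2 with h3 | h3
    · exact absurd h3 (hw j).ne'
    · exact h3
  obtain ⟨s, hs⟩ := trop_achieved l (F.v a) (by rw [hMa.1]; omega)
  rw [hMa.1] at hs
  -- l s applied to balancing
  have hcoord : ∀ j, ∑ i, F.w i * F.v i j = 0 := by
    intro j
    have := congrFun F.balanced j
    simpa [Finset.sum_apply, smul_eq_mul] using this
  have hbal : ∑ i, F.w i * dotZ (l s) (F.v i) = 0 := by
    unfold dotZ
    simp_rw [Finset.mul_sum]
    rw [Finset.sum_comm]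
    refine Finset.sum_eq_zero fun j _ => ?_
    calc ∑ i, F.w i * (l s j * F.v i j) = l s j * ∑ i, F.w i * F.v i j := by
          rw [Finset.mul_sum]; exact Finset.sum_congr rfl fun i _ => by ring
      _ = 0 := by rw [hcoord j, mul_zero]
  have hdle : ∀ j, j ≠ a → dotZ (l s) (F.v j) ≤ 0 := fun j hj =>
    (dot_le_trop l (F.v j) s).trans_eq (hMj j hj)
  have hsum2 : ∑ j ∈ Finset.univ.erase a, F.w j * (-(dotZ (l s) (F.v j))) = 1 := by
    have h1 : F.w a * dotZ (l s) (F.v a) + ∑ j ∈ Finset.univ.erase a,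
        F.w j * dotZ (l s) (F.v j) = 0 := by
      rw [Finset.add_sum_erase Finset.univ (fun j => F.w j * dotZ (l s) (F.v j))
        (Finset.mem_univ a)]
      exact hbal
    rw [hMa.2, hs] at h1
    have : ∑ j ∈ Finset.univ.erase a, F.w j * (-(dotZ (l s) (F.v j)))
        = -∑ j ∈ Finset.univ.erase a, F.w j * dotZ (l s) (F.v j) := by
      rw [← Finset.sum_neg_distrib]
      exact Finset.sum_congr rfl fun j _ => by ring
    omega
  obtain ⟨b, hbmem, hb1, hbz⟩ := sum_eq_one_aux (Finset.univ.erase a)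
    (fun j => F.w j * (-(dotZ (l s) (F.v j))))
    (fun j hj => mul_nonneg (hw j).le (by
      have := hdle j (Finset.mem_erase.mp hj).1; omega)) hsum2
  have hba : b ≠ a := (Finset.mem_erase.mp hbmem).1
  have hwb1 : F.w b = 1 := Int.eq_one_of_mul_eq_one_right (hw b).le hb1
  have hdb : dotZ (l s) (F.v b) = -1 := by
    rw [hwb1, one_mul] at hb1; omega
  refine ⟨a, b, hba.symm, s, hMa.2, hwb1, hs, hdb, fun j hja hjb => ?_⟩
  have h2 := hbz j (Finset.mem_erase.mpr ⟨hja, Finset.mem_univ j⟩) hjb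
  rcases mul_eq_zero.mp h2 with h3 | h3
  · exact absurd h3 (hw j).ne'
  · omega
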